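/- arXiv:2107.03123 — 3 statements merged into one kernel-verified Lean document; each statement's English description precedes it below -/
import Mathlib

section
/- Every HRRC instance in which each resident's preference list has length at most 1 admits a strongly stable matching. -/
/-- `a` is strictly preferred to `b` in the strictly ordered preference list `l`
(most preferred first). -/
def ListPref {α : Type*} [DecidableEq α] (l : List α) (a b : α) : Prop :=
  b ∈ l ∧ l.idxOf a < l.idxOf b

/-- An instance of the Hospitals/Residents problem with Regional Caps (HRRC):
residents `R`, hospitals `H`, strict preference lists on both sides,
hospital capacities `q`, a family `regions` of regions with regional caps `cap`. -/
structure HRRC (R H : Type*) where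
  prefR : R → List H
  prefH : H → List R
  q : H → ℕ
  regions : Set (Finset H)
  cap : Finset H → ℕ

namespace HRRC

variable {R H : Type*} [DecidableEq R] [DecidableEq H]

/-- Well-formedness: preference lists are strict (no repetitions), acceptability is
mutual, and regions are nonempty. -/
def WellFormed (I : HRRC R H) : Prop :=
  (∀ r, (I.prefR r).Nodup) ∧ (∀ h, (I.prefH h).Nodup) ∧
  (∀ r h, h ∈ I.prefR r ↔ r ∈ I.prefH h) ∧
  (∀ E ∈ I.regions, E.Nonempty)

/-- `M(h)`: the set of residents assigned to hospital `h`. -/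
def assignedTo (M : Finset (R × H)) (h : H) : Finset R :=
  (M.filter fun p => p.2 = h).image Prod.fst

/-- `M(E)`: the set of residents assigned to some hospital in the region `E`. -/
def assignedIn (M : Finset (R × H)) (E : Finset H) : Finset R :=
  (M.filter fun p => p.2 ∈ E).image Prod.fst

/-- `M` is a matching: pairs are mutually acceptable, each resident has at most one
hospital, and no hospital exceeds its capacity. -/
def IsMatching (I : HRRC R H) (M : Finset (R × H)) : Prop :=
  (∀ p ∈ M, p.2 ∈ I.prefR p.1 ∧ p.1 ∈ I.prefH p.2) ∧
  (∀ r h h', (r, h) ∈ M → (r, h') ∈ M → h = h') ∧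
  (∀ h, (assignedTo M h).card ≤ I.q h)

/-- Feasibility: all regional caps are respected. -/
def FeasibleCaps (I : HRRC R H) (M : Finset (R × H)) : Prop :=
  ∀ E ∈ I.regions, (assignedIn M E).card ≤ I.cap E

/-- `M \ {(r, M(r))} ∪ {(r, h)}`. -/
def move (M : Finset (R × H)) (r : R) (h : H) : Finset (R × H) :=
  (M.filter fun p => p.1 ≠ r) ∪ {(r, h)}

/-- `(r, h)` is a blocking pair for `M`. -/
def IsBlockingPair (I : HRRC R H) (M : Finset (R × H)) (r : R) (h : H) : Prop :=
  (r, h) ∉ M ∧ (h ∈ I.prefR r ∧ r ∈ I.prefH h) ∧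
  ((∀ h', (r, h') ∉ M) ∨ ∃ h', (r, h') ∈ M ∧ ListPref (I.prefR r) h h') ∧
  ((assignedTo M h).card < I.q h ∨ ∃ r' ∈ assignedTo M h, ListPref (I.prefH h) r r')

/-- `(r, h)` is a strong blocking pair for `M`. -/
def IsSBP (I : HRRC R H) (M : Finset (R × H)) (r : R) (h : H) : Prop :=
  I.IsBlockingPair M r h ∧
  (I.FeasibleCaps (move M r h) ∨ ∃ r' ∈ assignedTo M h, ListPref (I.prefH h) r r')

/-- `M` is a strongly stable matching of `I`. -/
def IsStronglyStable (I : HRRC R H) (M : Finset (R × H)) : Prop :=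
  I.IsMatching M ∧ I.FeasibleCaps M ∧ ∀ r h, ¬ I.IsSBP M r h

lemma mem_assignedTo {M : Finset (R × H)} {r : R} {h : H} :
    r ∈ assignedTo M h ↔ (r, h) ∈ M := by
  constructor
  · intro hr
    simp only [assignedTo, Finset.mem_image, Finset.mem_filter] at hr
    obtain ⟨⟨a, b⟩, ⟨hm, hb⟩, ha⟩ := hr
    cases ha; cases hb; exact hm
  · intro hm
    simp only [assignedTo, Finset.mem_image, Finset.mem_filter]
    exact ⟨(r, h), ⟨hm, rfl⟩, rfl⟩

lemma mem_assignedIn {M : Finset (R × H)} {r : R} {E : Finset H} :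
    r ∈ assignedIn M E ↔ ∃ h ∈ E, (r, h) ∈ M := by
  constructor
  · intro hr
    simp only [assignedIn, Finset.mem_image, Finset.mem_filter] at hr
    obtain ⟨⟨a, b⟩, ⟨hm, hb⟩, ha⟩ := hr
    cases ha; exact ⟨b, hb, hm⟩
  · rintro ⟨h, hE, hm⟩
    simp only [assignedIn, Finset.mem_image, Finset.mem_filter]
    exact ⟨(r, h), ⟨hm, hE⟩, rfl⟩

end HRRC

set_option maxHeartbeats 2000000 in
open HRRC in
/-- Every HRRC instance in which each resident's preference list has length at most 1
admits a strongly stable matching. -/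
theorem every_short_resident_list_HRRC_has_strongly_stable_matching
    {R H : Type*} [DecidableEq R] [DecidableEq H] [Fintype R] [Fintype H]
    (I : HRRC R H) (hwf : I.WellFormed)
    (hα : ∀ r, (I.prefR r).length ≤ 1) :
    ∃ M : Finset (R × H), I.IsStronglyStable M := by
  classical
  obtain ⟨hnodR, hnodH, hmut, -⟩ := hwf
  set C : ℤ := (Fintype.card R : ℤ) + 1 with hC
  set rank : R × H → ℤ := fun p => ((I.prefH p.2).idxOf p.1 : ℤ) with hrank
  set f : Finset (R × H) → ℤ := fun M => (M.card : ℤ) * C - ∑ p ∈ M, rank p with hf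
  set S : Finset (Finset (R × H)) :=
    (Finset.univ : Finset (R × H)).powerset.filter
      (fun M => I.IsMatching M ∧ I.FeasibleCaps M) with hS
  have hemp : (∅ : Finset (R × H)) ∈ S := by
    refine Finset.mem_filter.mpr ⟨Finset.mem_powerset.mpr (Finset.empty_subset _), ?_, ?_⟩
    · refine ⟨by simp, by simp, fun h => ?_⟩
      simp [assignedTo]
    · intro E _; simp [assignedIn]
  obtain ⟨M, hMS, hmax⟩ := S.exists_max_image f ⟨∅, hemp⟩
  obtain ⟨-, hM, hMcap⟩ := Finset.mem_filter.mp hMS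
  refine ⟨M, hM, hMcap, ?_⟩
  rintro r h ⟨⟨hrh, ⟨hacc, haccH⟩, -, hbp4⟩, hstrong⟩
  -- the unique acceptable hospital of r is h
  have huniq : ∀ h', h' ∈ I.prefR r → h' = h := by
    intro h' hh'
    have h1 : (I.prefR r).length = 1 := by
      have := List.length_pos_iff.mpr (List.ne_nil_of_mem hh')
      have := hα r
      omega
    obtain ⟨a, ha⟩ := List.length_eq_one_iff.mp h1
    rw [ha, List.mem_singleton] at hh' hacc
    rw [hh', hacc]
  -- r is unmatched in M
  have hun : ∀ h', (r, h') ∉ M := by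
    intro h' hm
    have : h' ∈ I.prefR r := (hM.1 (r, h') hm).1
    exact hrh ((huniq h' this) ▸ hm)
  have hrnotTo : ∀ h', r ∉ assignedTo M h' := fun h' hx => hun h' (mem_assignedTo.mp hx)
  have hrnotIn : ∀ E, r ∉ assignedIn M E := by
    intro E hx
    obtain ⟨h', _, hm⟩ := mem_assignedIn.mp hx
    exact hun h' hm
  have hrankrh : rank (r, h) < C := by
    have h1 : (I.prefH h).idxOf r < (I.prefH h).length :=
      List.idxOf_lt_length_iff.mpr haccH
    have h2 : (I.prefH h).length ≤ Fintype.card R := (hnodH h).length_le_card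
    simp only [hrank, hC]
    omega
  by_cases hA : ∃ r' ∈ assignedTo M h, ListPref (I.prefH h) r r'
  · -- Case A: swap r' for r at h
    obtain ⟨r', hr'mem, hr'in, hr'lt⟩ := hA
    have hr'M : (r', h) ∈ M := mem_assignedTo.mp hr'mem
    set M' : Finset (R × H) := insert (r, h) (M.erase (r', h)) with hM'
    have hmem' : ∀ p : R × H, p ∈ M' ↔ p = (r, h) ∨ (p ∈ M ∧ p ≠ (r', h)) := by
      intro p; simp [hM', Finset.mem_erase, and_comm]
    -- r' is only matched to h in M
    have hr'only : ∀ h'', (r', h'') ∈ M → h'' = h := fun h'' hm => hM.2.1 r' h'' h hm hr'M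
    have hne : r ≠ r' := fun he => hrnotTo h (he ▸ hr'mem)
    -- M' is a matching
    have hmatch' : I.IsMatching M' := by
      refine ⟨?_, ?_, ?_⟩
      · intro p hp
        rcases (hmem' p).mp hp with rfl | ⟨hp, -⟩
        · exact ⟨hacc, haccH⟩
        · exact hM.1 p hp
      · intro x h1 h2 hx1 hx2
        rcases (hmem' _).mp hx1 with he1 | ⟨he1, -⟩ <;>
          rcases (hmem' _).mp hx2 with he2 | ⟨he2, -⟩
        · rw [Prod.mk.injEq] at he1 he2; rw [he1.2, he2.2]
        · exact absurd he2 (by cases he1; exact hun h2)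
        · exact absurd he1 (by cases he2; exact hun h1)
        · exact hM.2.1 x h1 h2 he1 he2
      · intro h''
        by_cases hh : h'' = h
        · subst hh
          have heq : assignedTo M' h'' = insert r ((assignedTo M h'').erase r') := by
            ext x
            rw [Finset.mem_insert, Finset.mem_erase, mem_assignedTo, mem_assignedTo, hmem']
            constructor
            · rintro (he | ⟨hm, hne2⟩)
              · exact Or.inl (congrArg Prod.fst he)
              · exact Or.inr ⟨fun hx => hne2 (by rw [hx]), hm⟩
            · rintro (rfl | ⟨hxne, hm⟩)
              · exact Or.inl rfl
              · exact Or.inr ⟨hm, fun hx => hxne (congrArg Prod.fst hx)⟩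
          rw [heq]
          calc (insert r ((assignedTo M h'').erase r')).card
              ≤ ((assignedTo M h'').erase r').card + 1 := Finset.card_insert_le _ _
            _ = (assignedTo M h'').card := by
                rw [Finset.card_erase_of_mem hr'mem]
                have := Finset.card_pos.mpr ⟨r', hr'mem⟩
                omega
            _ ≤ I.q h'' := hM.2.2 h''
        · have heq : assignedTo M' h'' ⊆ assignedTo M h'' := by
            intro x hx
            rw [mem_assignedTo] at hx ⊢
            rcases (hmem' _).mp hx with he | ⟨he, -⟩
            · exact absurd (congrArg Prod.snd he) hh
            · exact he
          exact le_trans (Finset.card_le_card heq) (hM.2.2 h'')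
    -- M' is feasible
    have hcap' : I.FeasibleCaps M' := by
      intro E hE
      by_cases hh : h ∈ E
      · have hsub : assignedIn M' E ⊆ insert r ((assignedIn M E).erase r') := by
          intro x hx
          obtain ⟨h'', hh'', hm⟩ := mem_assignedIn.mp hx
          rcases (hmem' _).mp hm with he | ⟨he, hne2⟩
          · rw [Prod.mk.injEq] at he; exact Finset.mem_insert.mpr (Or.inl he.1)
          · refine Finset.mem_insert.mpr (Or.inr (Finset.mem_erase.mpr ⟨?_, ?_⟩))
            · intro hxr'
              subst hxr'
              exact hne2 (by rw [hr'only h'' he])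
            · exact mem_assignedIn.mpr ⟨h'', hh'', he⟩
        have hr'E : r' ∈ assignedIn M E := mem_assignedIn.mpr ⟨h, hh, hr'M⟩
        calc (assignedIn M' E).card ≤ (insert r ((assignedIn M E).erase r')).card :=
              Finset.card_le_card hsub
          _ ≤ ((assignedIn M E).erase r').card + 1 := Finset.card_insert_le _ _
          _ = (assignedIn M E).card := by
              rw [Finset.card_erase_of_mem hr'E]
              have := Finset.card_pos.mpr ⟨r', hr'E⟩
              omega
          _ ≤ I.cap E := hMcap E hE
      · have hsub : assignedIn M' E ⊆ assignedIn M E := by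
          intro x hx
          obtain ⟨h'', hh'', hm⟩ := mem_assignedIn.mp hx
          rcases (hmem' _).mp hm with he | ⟨he, -⟩
          · rw [Prod.mk.injEq] at he; exact absurd (he.2 ▸ hh'') hh
          · exact mem_assignedIn.mpr ⟨h'', hh'', he⟩
        exact le_trans (Finset.card_le_card hsub) (hMcap E hE)
    have hM'S : M' ∈ S :=
      Finset.mem_filter.mpr ⟨Finset.mem_powerset.mpr (Finset.subset_univ _), hmatch', hcap'⟩
    -- f M' > f M
    have hrhnot : (r, h) ∉ M.erase (r', h) := fun hx => hun h (Finset.mem_of_mem_erase hx)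
    have hcard : M'.card = M.card := by
      rw [hM', Finset.card_insert_of_notMem hrhnot, Finset.card_erase_of_mem hr'M]
      have := Finset.card_pos.mpr ⟨(r', h), hr'M⟩
      omega
    have hsum : ∑ p ∈ M', rank p = ∑ p ∈ M, rank p - rank (r', h) + rank (r, h) := by
      rw [hM', Finset.sum_insert hrhnot]
      have := Finset.sum_erase_add M rank hr'M
      omega
    have hlt : f M < f M' := by
      simp only [hf, hcard, hsum]
      have : rank (r, h) < rank (r', h) := by
        simp only [hrank]; exact_mod_cast hr'lt
      omega
    exact absurd (hmax M' hM'S) (not_le.mpr hlt)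
  · -- Case B: add (r, h)
    have hroom : (assignedTo M h).card < I.q h := hbp4.resolve_right hA
    have hfeas : I.FeasibleCaps (move M r h) := hstrong.resolve_right hA
    set M' : Finset (R × H) := insert (r, h) M with hM'
    have hmoveeq : move M r h = M' := by
      rw [HRRC.move, Finset.filter_true_of_mem (fun p hp => ?_), Finset.union_comm,
        ← Finset.insert_eq]
      intro he
      exact hun p.2 (by rw [← he]; exact hp)
    have hmatch' : I.IsMatching M' := by
      refine ⟨?_, ?_, ?_⟩
      · intro p hp
        rcases Finset.mem_insert.mp hp with rfl | hp
        · exact ⟨hacc, haccH⟩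
        · exact hM.1 p hp
      · intro x h1 h2 hx1 hx2
        rcases Finset.mem_insert.mp hx1 with he1 | he1 <;>
          rcases Finset.mem_insert.mp hx2 with he2 | he2
        · rw [Prod.mk.injEq] at he1 he2; rw [he1.2, he2.2]
        · exact absurd he2 (by cases he1; exact hun h2)
        · exact absurd he1 (by cases he2; exact hun h1)
        · exact hM.2.1 x h1 h2 he1 he2
      · intro h''
        by_cases hh : h'' = h
        · subst hh
          have heq : assignedTo M' h'' = insert r (assignedTo M h'') := by
            ext x
            rw [Finset.mem_insert, mem_assignedTo, mem_assignedTo, hM', Finset.mem_insert]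
            constructor
            · rintro (he | hm)
              · exact Or.inl (congrArg Prod.fst he)
              · exact Or.inr hm
            · rintro (rfl | hm)
              · exact Or.inl rfl
              · exact Or.inr hm
          rw [heq]
          calc (insert r (assignedTo M h'')).card ≤ (assignedTo M h'').card + 1 :=
                Finset.card_insert_le _ _
            _ ≤ I.q h'' := hroom
        · have heq : assignedTo M' h'' ⊆ assignedTo M h'' := by
            intro x hx
            rw [mem_assignedTo] at hx ⊢
            rcases Finset.mem_insert.mp hx with he | he
            · exact absurd (congrArg Prod.snd he) hh
            · exact he
          exact le_trans (Finset.card_le_card heq) (hM.2.2 h'')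
    have hcap' : I.FeasibleCaps M' := hmoveeq ▸ hfeas
    have hM'S : M' ∈ S :=
      Finset.mem_filter.mpr ⟨Finset.mem_powerset.mpr (Finset.subset_univ _), hmatch', hcap'⟩
    have hrhnot : (r, h) ∉ M := hun h
    have hlt : f M < f M' := by
      have h2 := hrankrh
      simp only [hf, hM', Finset.card_insert_of_notMem hrhnot, Finset.sum_insert hrhnot]
      push_cast
      rw [add_mul, one_mul]
      omega
    exact absurd (hmax M' hM'S) (not_le.mpr hlt)
end

section
/- The HRRC instance G₂ defined by residents R = {r₁, r₂}, hospitals H = {h₁, h₂} each of capacity 1, preference lists r₁: h₁ ≻ h₂; r₂: h₂ ≻ h₁; h₁: r₂ ≻ r₁; h₂: r₁ ≻ r₂, and the single region {h₁, h₂} with regional cap 1, admits no strongly stable matching. -/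
/-- The instance `G₂` of Kamada and Kojima: residents `r₁ = 0`, `r₂ = 1`,
hospitals `h₁ = 0`, `h₂ = 1`, each of capacity 1, preference lists
`r₁: h₁ ≻ h₂`, `r₂: h₂ ≻ h₁`, `h₁: r₂ ≻ r₁`, `h₂: r₁ ≻ r₂`, and the single
region `{h₁, h₂}` with regional cap 1. -/
def G2 : HRRC (Fin 2) (Fin 2) where
  prefR := ![[0, 1], [1, 0]]
  prefH := ![[1, 0], [0, 1]]
  q := fun _ => 1
  regions := {({0, 1} : Finset (Fin 2))}
  cap := fun _ => 1


instance {α : Type*} [DecidableEq α] (l : List α) (a b : α) :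
    Decidable (ListPref l a b) := inferInstanceAs (Decidable (_ ∧ _))


instance {R H : Type*} [DecidableEq R] [DecidableEq H] [Fintype R] [Fintype H]
    (I : HRRC R H) (M : Finset (R × H)) : Decidable (I.IsMatching M) :=
  inferInstanceAs (Decidable (_ ∧ _ ∧ _))

instance {R H : Type*} [DecidableEq R] [DecidableEq H]
    (I : HRRC R H) (M : Finset (R × H)) (r : R) (h : H) [Fintype H] :
    Decidable (I.IsBlockingPair M r h) :=
  inferInstanceAs (Decidable (_ ∧ _ ∧ _ ∧ _))

open HRRC in
lemma G2_feas_iff (M : Finset (Fin 2 × Fin 2)) :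
    G2.FeasibleCaps M ↔ (assignedIn M {0, 1}).card ≤ 1 := by
  simp [HRRC.FeasibleCaps, G2]

open HRRC in
lemma G2_stable_iff (M : Finset (Fin 2 × Fin 2)) :
    G2.IsStronglyStable M ↔
      (G2.IsMatching M ∧ (assignedIn M {0, 1}).card ≤ 1 ∧
        ∀ r h, ¬ (G2.IsBlockingPair M r h ∧
          ((assignedIn (move M r h) {0, 1}).card ≤ 1 ∨
            ∃ r' ∈ assignedTo M h, ListPref (G2.prefH h) r r'))) := by
  simp only [HRRC.IsStronglyStable, HRRC.IsSBP, G2_feas_iff]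

/-- `G₂` admits no strongly stable matching. -/
theorem G2_has_no_strongly_stable_matching :
    ¬ ∃ M : Finset (Fin 2 × Fin 2), G2.IsStronglyStable M := by
  simp only [G2_stable_iff]
  decide
end

section
/- Every HRRCDR instance in which each resident's preference list has length at most 2, each hospital's preference list has length at most 2, every region has size at most 2, and for every region E of size 2 at most one resident is acceptable to both hospitals of E, admits a strongly stable matching. -/
section Aux

open Finset

attribute [local instance] Classical.propDecidable
set_option linter.unusedSectionVars false
set_option linter.unusedVariables false

namespace SSAux

variable {R H : Type*} [DecidableEq R] [DecidableEq H] [Fintype R] [Fintype H]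

/-- All mutually acceptable pairs (acceptability as recorded on the resident side). -/
noncomputable def accP (I : HRRC R H) : Finset (R × H) :=
  Finset.univ.filter fun p => p.2 ∈ I.prefR p.1

lemma mem_accP {I : HRRC R H} {e : R × H} : e ∈ accP I ↔ e.2 ∈ I.prefR e.1 := by
  simp [accP]

/-- The region of a hospital (or `{h}` if it belongs to no region). -/
noncomputable def regOf (I : HRRC R H) (h : H) : Finset H :=
  if hex : ∃ E ∈ I.regions, h ∈ E then hex.choose else {h}

/-- The cap of the region of a hospital (or a huge number if no region). -/
noncomputable def capOf (I : HRRC R H) (h : H) : ℕ :=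
  if hex : ∃ E ∈ I.regions, h ∈ E then I.cap hex.choose else Fintype.card (R × H) + 1

lemma mem_regOf_self (I : HRRC R H) (h : H) : h ∈ regOf I h := by
  unfold regOf
  split
  · next hex => exact hex.choose_spec.2
  · exact Finset.mem_singleton_self h

lemma regOf_eq {I : HRRC R H}
    (hdisj : I.regions.Pairwise fun E₁ E₂ => Disjoint E₁ E₂)
    {E : Finset H} {h : H} (hE : E ∈ I.regions) (hh : h ∈ E) :
    regOf I h = E ∧ capOf I h = I.cap E := by
  have hex : ∃ E ∈ I.regions, h ∈ E := ⟨E, hE, hh⟩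
  have hch := hex.choose_spec
  have hEq : hex.choose = E := by
    by_contra hne
    exact Finset.disjoint_left.mp (hdisj hch.1 hE hne) hch.2 hh
  constructor
  · rw [regOf, dif_pos hex, hEq]
  · rw [capOf, dif_pos hex, hEq]

/-- Coherence: hospitals in the same group have the same group and cap. -/
lemma regOf_coh {I : HRRC R H}
    (hdisj : I.regions.Pairwise fun E₁ E₂ => Disjoint E₁ E₂)
    {h h' : H} (hh' : h' ∈ regOf I h) :
    regOf I h' = regOf I h ∧ capOf I h' = capOf I h := by
  by_cases hex : ∃ E ∈ I.regions, h ∈ E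
  · have hch := hex.choose_spec
    have h1 : regOf I h = hex.choose := by rw [regOf, dif_pos hex]
    have h2 : capOf I h = I.cap hex.choose := by rw [capOf, dif_pos hex]
    rw [h1] at hh'
    obtain ⟨e1, e2⟩ := regOf_eq hdisj hch.1 hh'
    exact ⟨by rw [e1, h1], by rw [e2, h2]⟩
  · have h1 : regOf I h = {h} := by rw [regOf, dif_neg hex]
    rw [h1] at hh'
    rw [Finset.mem_singleton] at hh'
    subst hh'
    exact ⟨rfl, rfl⟩

lemma capOf_cases (I : HRRC R H) (h : H) :
    (capOf I h = Fintype.card (R × H) + 1) ∨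
    (regOf I h ∈ I.regions ∧ capOf I h = I.cap (regOf I h)) := by
  by_cases hex : ∃ E ∈ I.regions, h ∈ E
  · right
    have h1 : regOf I h = hex.choose := by rw [regOf, dif_pos hex]
    have h2 : capOf I h = I.cap hex.choose := by rw [capOf, dif_pos hex]
    rw [h1, h2]
    exact ⟨hex.choose_spec.1, rfl⟩
  · left; rw [capOf, dif_neg hex]

/-- Tiebreak for ordering the two hospitals of a region: the hospital preferred by
the (unique) common resident gets `0`. -/
noncomputable def ord2 (I : HRRC R H) (h : H) : ℕ :=
  if hex : ∃ c, ∀ g ∈ regOf I h, c ∈ I.prefH g then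
    (if ∃ g ∈ regOf I h, g ≠ h ∧
        (I.prefR hex.choose).idxOf h < (I.prefR hex.choose).idxOf g then 0 else 1)
  else 0

/-- Priority key (smaller = higher priority for the hospital side). -/
noncomputable def keyE (I : HRRC R H) (e : R × H) : ℕ :=
  ord2 I e.2 * (Fintype.card R + 1) + (I.prefH e.2).idxOf e.1

noncomputable def enc : R × H → ℕ := fun e => (Fintype.equivFin (R × H)) e

noncomputable def key' (I : HRRC R H) (e : R × H) : ℕ :=
  keyE I e * Fintype.card (R × H) + enc e

noncomputable def lrel (I : HRRC R H) : R × H → R × H → Prop :=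
  fun a b => key' I a ≤ key' I b

lemma enc_lt (e : R × H) : enc e < Fintype.card (R × H) := (Fintype.equivFin (R × H) e).2

lemma key_le_of_key' {I : HRRC R H} {a b : R × H} (hk : key' I a ≤ key' I b) :
    keyE I a ≤ keyE I b := by
  unfold key' at hk
  by_contra hgt
  push_neg at hgt
  have h1 := enc_lt a
  have h2 := enc_lt b
  nlinarith [Nat.mul_le_mul_right (Fintype.card (R × H)) (Nat.succ_le_of_lt hgt)]

noncomputable instance lrelDec (I : HRRC R H) : DecidableRel (lrel I) :=
  fun a b => Nat.decLe _ _

instance lrelTrans (I : HRRC R H) : IsTrans (R × H) (lrel I) :=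
  ⟨fun _ _ _ => Nat.le_trans⟩

instance lrelTotal (I : HRRC R H) : IsTotal (R × H) (lrel I) :=
  ⟨fun a b => Nat.le_total _ _⟩

instance lrelAntisymm (I : HRRC R H) : IsAntisymm (R × H) (lrel I) := by
  constructor
  intro a b hab hba
  have heq : key' I a = key' I b := Nat.le_antisymm hab hba
  have hC : 0 < Fintype.card (R × H) := Fintype.card_pos_iff.mpr ⟨a⟩
  have ha := enc_lt (R := R) (H := H) a
  have hb := enc_lt (R := R) (H := H) b
  have henc : enc a = enc b := by
    have h1 : key' I a % Fintype.card (R × H) = enc a := by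
      unfold key'; rw [Nat.mul_comm, Nat.mul_add_mod]; exact Nat.mod_eq_of_lt ha
    have h2 : key' I b % Fintype.card (R × H) = enc b := by
      unfold key'; rw [Nat.mul_comm, Nat.mul_add_mod]; exact Nat.mod_eq_of_lt hb
    rw [← h1, ← h2, heq]
  exact (Fintype.equivFin (R × H)).injective (Fin.ext henc)

/-- Global processing list: all acceptable pairs sorted by priority. -/
noncomputable def LL (I : HRRC R H) : List (R × H) := (accP I).sort (lrel I)

def cntH (A : Finset (R × H)) (h : H) : ℕ := (A.filter fun p => p.2 = h).card

noncomputable def cntE (I : HRRC R H) (A : Finset (R × H)) (h : H) : ℕ :=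
  (A.filter fun p => p.2 ∈ regOf I h).card

noncomputable def okP (I : HRRC R H) (e : R × H) (A : Finset (R × H)) : Prop :=
  cntH A e.2 < I.q e.2 ∧ cntE I A e.2 < capOf I e.2

/-- Greedy hospital-side choice: walk along the priority list keeping an edge if
its hospital still has room and its region still has room. -/
noncomputable def ch (I : HRRC R H) :
    List (R × H) → Finset (R × H) → Finset (R × H) → Finset (R × H)
  | [], _, acc => acc
  | f :: t, X, acc =>
      if f ∈ X ∧ okP I f acc then ch I t X (insert f acc) else ch I t X acc

noncomputable def CH (I : HRRC R H) (X : Finset (R × H)) : Finset (R × H) :=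
  ch I (LL I) X ∅

/-- Resident-side choice: each resident keeps her most preferred available edge. -/
noncomputable def CR (I : HRRC R H) (X : Finset (R × H)) : Finset (R × H) :=
  X.filter fun e => ∀ f ∈ X, f.1 = e.1 →
    (I.prefR e.1).idxOf e.2 ≤ (I.prefR f.1).idxOf f.2

noncomputable def rejH (I : HRRC R H) (X : Finset (R × H)) : Finset (R × H) := X \ CH I X

noncomputable def rejR (I : HRRC R H) (X : Finset (R × H)) : Finset (R × H) := X \ CR I X

noncomputable def Phi (I : HRRC R H) (X : Finset (R × H)) : Finset (R × H) :=
  accP I \ rejR I (accP I \ rejH I X)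

/-! ### Counting lemmas -/

lemma cntH_insert {A : Finset (R × H)} {f : R × H} (hf : f ∉ A) (h : H) :
    cntH (insert f A) h = cntH A h + if f.2 = h then 1 else 0 := by
  unfold cntH
  rw [Finset.filter_insert]
  split
  · rw [Finset.card_insert_of_notMem (fun hmem => hf (Finset.mem_filter.mp hmem).1)]
  · simp

lemma cntE_insert (I : HRRC R H) {A : Finset (R × H)} {f : R × H} (hf : f ∉ A) (h : H) :
    cntE I (insert f A) h = cntE I A h + if f.2 ∈ regOf I h then 1 else 0 := by
  unfold cntE
  rw [Finset.filter_insert]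
  split
  · rw [Finset.card_insert_of_notMem (fun hmem => hf (Finset.mem_filter.mp hmem).1)]
  · simp

lemma cntH_mono {A B : Finset (R × H)} (hAB : A ⊆ B) (h : H) : cntH A h ≤ cntH B h :=
  Finset.card_le_card (Finset.filter_subset_filter _ hAB)

lemma cntE_mono (I : HRRC R H) {A B : Finset (R × H)} (hAB : A ⊆ B) (h : H) :
    cntE I A h ≤ cntE I B h :=
  Finset.card_le_card (Finset.filter_subset_filter _ hAB)

lemma cntE_eq_sum (I : HRRC R H) (A : Finset (R × H)) (h : H) :
    cntE I A h = ∑ h' ∈ regOf I h, cntH A h' := by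
  unfold cntE cntH
  rw [← Finset.card_biUnion]
  · congr 1
    ext p
    simp only [Finset.mem_biUnion, Finset.mem_filter]
    constructor
    · rintro ⟨hp, hmem⟩; exact ⟨p.2, hmem, hp, rfl⟩
    · rintro ⟨h', hh', hp, hph⟩; exact ⟨hp, hph ▸ hh'⟩
  · intro x _ y _ hxy
    rw [Function.onFun, Finset.disjoint_left]
    intro p hp hq
    exact hxy ((Finset.mem_filter.mp hp).2.symm.trans (Finset.mem_filter.mp hq).2)

lemma cntE_congr (I : HRRC R H)
    (hdisj : I.regions.Pairwise fun E₁ E₂ => Disjoint E₁ E₂)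
    {h h' : H} (hh' : h' ∈ regOf I h) (A : Finset (R × H)) :
    cntE I A h' = cntE I A h := by
  unfold cntE
  rw [(regOf_coh hdisj hh').1]

/-! ### Basic lemmas about the greedy choice -/

lemma ch_acc_subset (I : HRRC R H) :
    ∀ (todo : List (R × H)) (X acc : Finset (R × H)), acc ⊆ ch I todo X acc := by
  intro todo
  induction todo with
  | nil => intro X acc; exact Finset.Subset.refl _
  | cons f t ih =>
      intro X acc
      show acc ⊆ (if f ∈ X ∧ okP I f acc then ch I t X (insert f acc) else ch I t X acc)
      split
      · exact (Finset.subset_insert f acc).trans (ih X (insert f acc))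
      · exact ih X acc

lemma ch_subset (I : HRRC R H) :
    ∀ (todo : List (R × H)) (X acc : Finset (R × H)) (e : R × H),
      e ∈ ch I todo X acc → e ∈ acc ∨ (e ∈ X ∧ e ∈ todo) := by
  intro todo
  induction todo with
  | nil => intro X acc e he; exact Or.inl he
  | cons f t ih =>
      intro X acc e he
      rw [show ch I (f :: t) X acc
          = (if f ∈ X ∧ okP I f acc then ch I t X (insert f acc) else ch I t X acc) from rfl] at he
      split at he
      · next hcond =>
          rcases ih X (insert f acc) e he with hacc | ⟨heX, het⟩
          · rcases Finset.mem_insert.mp hacc with rfl | h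
            · exact Or.inr ⟨hcond.1, List.mem_cons_self⟩
            · exact Or.inl h
          · exact Or.inr ⟨heX, List.mem_cons_of_mem _ het⟩
      · rcases ih X acc e he with hacc | ⟨heX, het⟩
        · exact Or.inl hacc
        · exact Or.inr ⟨heX, List.mem_cons_of_mem _ het⟩

/-! ### Resident-side choice lemmas -/

lemma CR_subset (I : HRRC R H) (X : Finset (R × H)) : CR I X ⊆ X :=
  Finset.filter_subset _ _

lemma CR_unique {I : HRRC R H} (hwf : I.WellFormed) {X : Finset (R × H)}
    (hX : X ⊆ accP I) {e e' : R × H}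
    (he : e ∈ CR I X) (he' : e' ∈ CR I X) (h1 : e.1 = e'.1) : e = e' := by
  obtain ⟨heX, hemin⟩ := Finset.mem_filter.mp he
  obtain ⟨he'X, he'min⟩ := Finset.mem_filter.mp he'
  have h2 := hemin e' he'X h1.symm
  have h3 := he'min e heX h1
  rw [h1] at h2
  have hidx : (I.prefR e'.1).idxOf e.2 = (I.prefR e'.1).idxOf e'.2 := le_antisymm
    (by rw [← h1]; rw [h1]; exact h2) (by
      rw [h1] at h3; exact h3)
  have heacc : e.2 ∈ I.prefR e.1 := mem_accP.mp (hX heX)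
  have he'acc : e'.2 ∈ I.prefR e'.1 := mem_accP.mp (hX he'X)
  rw [h1] at heacc
  have := (List.idxOf_inj heacc).mp hidx
  exact Prod.ext h1 this

lemma CR_exists {I : HRRC R H} {X : Finset (R × H)} {e : R × H} (heX : e ∈ X) :
    ∃ g ∈ CR I X, g.1 = e.1 := by
  have hne : (X.filter fun f => f.1 = e.1).Nonempty :=
    ⟨e, Finset.mem_filter.mpr ⟨heX, rfl⟩⟩
  obtain ⟨g, hg, hgmin⟩ :=
    Finset.exists_min_image (X.filter fun f => f.1 = e.1)
      (fun f => (I.prefR f.1).idxOf f.2) hne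
  obtain ⟨hgX, hg1⟩ := Finset.mem_filter.mp hg
  refine ⟨g, Finset.mem_filter.mpr ⟨hgX, ?_⟩, hg1⟩
  intro f hf hf1
  have : f ∈ X.filter fun f => f.1 = e.1 :=
    Finset.mem_filter.mpr ⟨hf, by rw [hf1, hg1]⟩
  have h := hgmin f this
  calc (I.prefR g.1).idxOf g.2 ≤ (I.prefR f.1).idxOf f.2 := h

lemma rejR_mono (I : HRRC R H) {X Y : Finset (R × H)} (hXY : X ⊆ Y) :
    rejR I X ⊆ rejR I Y := by
  intro e he
  obtain ⟨heX, heC⟩ := Finset.mem_sdiff.mp he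
  refine Finset.mem_sdiff.mpr ⟨hXY heX, ?_⟩
  intro heCY
  apply heC
  obtain ⟨-, hmin⟩ := Finset.mem_filter.mp heCY
  exact Finset.mem_filter.mpr ⟨heX, fun f hf => hmin f (hXY hf)⟩

/-! ### The main greedy lemmas -/

/-- Substitutability of the greedy choice. -/
lemma ch_sub (I : HRRC R H)
    (hdisj : I.regions.Pairwise fun E₁ E₂ => Disjoint E₁ E₂)
    {X Y : Finset (R × H)} (hXY : X ⊆ Y) :
    ∀ (todo : List (R × H)) (aX aY : Finset (R × H)),
      todo.Nodup →
      (∀ f ∈ todo, f ∉ aX) → (∀ f ∈ todo, f ∉ aY) →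
      (∀ h, cntE I aX h ≤ cntE I aY h) →
      (∀ h, cntH aX h ≤ cntH aY h ∨ capOf I h ≤ cntE I aY h) →
      ∀ e, e ∈ X → e ∈ todo → e ∈ ch I todo Y aY → e ∈ ch I todo X aX := by
  intro todo
  induction todo with
  | nil => intro aX aY _ _ _ _ _ e _ het _; exact absurd het (List.not_mem_nil)
  | cons f t ih =>
      intro aX aY hnd hdX hdY hI1 hI2 e heX het heY
      have hndt : t.Nodup := (List.nodup_cons.mp hnd).2
      have hfnt : f ∉ t := (List.nodup_cons.mp hnd).1
      have hfaX : f ∉ aX := hdX f (List.mem_cons_self)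
      have hfaY : f ∉ aY := hdY f (List.mem_cons_self)
      have hdX' : ∀ g ∈ t, g ∉ aX := fun g hg => hdX g (List.mem_cons_of_mem _ hg)
      have hdY' : ∀ g ∈ t, g ∉ aY := fun g hg => hdY g (List.mem_cons_of_mem _ hg)
      by_cases hcY : f ∈ Y ∧ okP I f aY
      · -- Y keeps f
        rw [show ch I (f :: t) Y aY = ch I t Y (insert f aY) from if_pos hcY] at heY
        by_cases hfX : f ∈ X
        · -- X also keeps f
          have hokX : okP I f aX := by
            constructor
            · rcases hI2 f.2 with hle | hcap
              · exact lt_of_le_of_lt hle hcY.2.1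
              · exact absurd hcY.2.2 (not_lt.mpr hcap)
            · exact lt_of_le_of_lt (hI1 f.2) hcY.2.2
          rw [show ch I (f :: t) X aX = ch I t X (insert f aX) from if_pos ⟨hfX, hokX⟩]
          rcases List.mem_cons.mp het with rfl | het'
          · exact ch_acc_subset I t X (insert e aX) (Finset.mem_insert_self e aX)
          · refine ih (insert f aX) (insert f aY) hndt
              (fun g hg => by
                simp only [Finset.mem_insert]; push_neg
                exact ⟨fun hge => hfnt (hge ▸ hg), hdX' g hg⟩)
              (fun g hg => by
                simp only [Finset.mem_insert]; push_neg
                exact ⟨fun hge => hfnt (hge ▸ hg), hdY' g hg⟩)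
              (fun h => by
                rw [cntE_insert I hfaX, cntE_insert I hfaY]
                exact Nat.add_le_add_right (hI1 h) _)
              (fun h => by
                rcases hI2 h with hle | hcap
                · left
                  rw [cntH_insert hfaX, cntH_insert hfaY]
                  exact Nat.add_le_add_right hle _
                · right
                  rw [cntE_insert I hfaY]
                  exact le_trans hcap (Nat.le_add_right _ _))
              e heX het' heY
        · -- f ∉ X : only Y keeps f
          rw [show ch I (f :: t) X aX = ch I t X aX from if_neg (fun hc => hfX hc.1)]
          rcases List.mem_cons.mp het with rfl | het'
          · exact absurd heX hfX
          · refine ih aX (insert f aY) hndt hdX'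
              (fun g hg => by
                simp only [Finset.mem_insert]; push_neg
                exact ⟨fun hge => hfnt (hge ▸ hg), hdY' g hg⟩)
              (fun h => le_trans (hI1 h) (by
                rw [cntE_insert I hfaY]; exact Nat.le_add_right _ _))
              (fun h => by
                rcases hI2 h with hle | hcap
                · left
                  rw [cntH_insert hfaY]
                  exact le_trans hle (Nat.le_add_right _ _)
                · right
                  rw [cntE_insert I hfaY]
                  exact le_trans hcap (Nat.le_add_right _ _))
              e heX het' heY
      · -- Y skips f
        rw [show ch I (f :: t) Y aY = ch I t Y aY from if_neg hcY] at heY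
        by_cases hcX : f ∈ X ∧ okP I f aX
        · -- X keeps f
          have hfY : f ∈ Y := hXY hcX.1
          have hnokY : ¬ okP I f aY := fun hk => hcY ⟨hfY, hk⟩
          rw [show ch I (f :: t) X aX = ch I t X (insert f aX) from if_pos hcX]
          have hokX := hcX.2
          -- new invariants
          have hI1' : ∀ h, cntE I (insert f aX) h ≤ cntE I aY h := by
            intro h
            rw [cntE_insert I hfaX]
            by_cases hmem : f.2 ∈ regOf I h
            · rw [if_pos hmem]
              -- need strict : cntE aX h < cntE aY h
              have hcntXf : cntE I aX f.2 = cntE I aX h := cntE_congr I hdisj hmem aX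
              have hcntYf : cntE I aY f.2 = cntE I aY h := cntE_congr I hdisj hmem aY
              have hcapf : capOf I f.2 = capOf I h := (regOf_coh hdisj hmem).2
              by_cases hcap : capOf I f.2 ≤ cntE I aY f.2
              · -- region tight in Y
                have : cntE I aX h < cntE I aY h := by
                  calc cntE I aX h = cntE I aX f.2 := hcntXf.symm
                    _ < capOf I f.2 := hokX.2
                    _ ≤ cntE I aY f.2 := hcap
                    _ = cntE I aY h := hcntYf
                omega
              · -- hospital f.2 tight in Y
                push_neg at hcap
                have hq : I.q f.2 ≤ cntH aY f.2 := by
                  rcases not_and_or.mp hnokY with h1 | h2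
                  · exact not_lt.mp h1
                  · exact absurd hcap h2
                -- all hospitals in the region satisfy cntH aX ≤ cntH aY, strict at f.2
                have hsum : cntE I aX h < cntE I aY h := by
                  rw [cntE_eq_sum, cntE_eq_sum]
                  apply Finset.sum_lt_sum
                  · intro h' hh'
                    rcases hI2 h' with hle | hcap'
                    · exact hle
                    · exfalso
                      have h3 : capOf I h' = capOf I h := (regOf_coh hdisj hh').2
                      have h4 : cntE I aY h' = cntE I aY h := cntE_congr I hdisj hh' aY
                      rw [h3, h4] at hcap'
                      rw [hcntYf, hcapf] at hcap
                      omega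
                  · refine ⟨f.2, hmem, ?_⟩
                    exact lt_of_lt_of_le hokX.1 hq
                omega
            · rw [if_neg hmem, Nat.add_zero]
              exact hI1 h
          have hI2' : ∀ h, cntH (insert f aX) h ≤ cntH aY h ∨ capOf I h ≤ cntE I aY h := by
            intro h
            rw [cntH_insert hfaX]
            by_cases hh : f.2 = h
            · rw [if_pos hh]
              rcases not_and_or.mp hnokY with h1 | h2
              · left
                have hq : I.q f.2 ≤ cntH aY f.2 := not_lt.mp h1
                have hlt := hokX.1
                subst hh
                omega
              · right
                have : capOf I f.2 ≤ cntE I aY f.2 := not_lt.mp h2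
                rwa [hh] at this
            · rw [if_neg hh, Nat.add_zero]
              exact hI2 h
          rcases List.mem_cons.mp het with rfl | het'
          · exact ch_acc_subset I t X (insert e aX) (Finset.mem_insert_self e aX)
          · refine ih (insert f aX) aY hndt
              (fun g hg => by
                simp only [Finset.mem_insert]; push_neg
                exact ⟨fun hge => hfnt (hge ▸ hg), hdX' g hg⟩)
              hdY' hI1' hI2' e heX het' heY
        · -- both skip
          rw [show ch I (f :: t) X aX = ch I t X aX from if_neg hcX]
          rcases List.mem_cons.mp het with rfl | het'
          · -- e = f, but then e ∈ ch t Y aY is impossible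
            exfalso
            rcases ch_subset I t Y aY e heY with hacc | ⟨_, het2⟩
            · exact hfaY hacc
            · exact hfnt het2
          · exact ih aX aY hndt hdX' hdY' hI1 hI2 e heX het' heY

/-- Consistency of the greedy choice. -/
lemma ch_consistent (I : HRRC R H) {X A : Finset (R × H)} (hAX : A ⊆ X) :
    ∀ (todo : List (R × H)) (acc : Finset (R × H)),
      (∀ f ∈ todo, f ∈ X → f ∈ ch I todo X acc → f ∈ A) →
      ch I todo A acc = ch I todo X acc := by
  intro todo
  induction todo with
  | nil => intro acc _; rfl
  | cons f t ih =>
      intro acc hyp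
      by_cases hcX : f ∈ X ∧ okP I f acc
      · have hfres : f ∈ ch I (f :: t) X acc := by
          rw [show ch I (f :: t) X acc = ch I t X (insert f acc) from if_pos hcX]
          exact ch_acc_subset I t X (insert f acc) (Finset.mem_insert_self f acc)
        have hfA : f ∈ A := hyp f (List.mem_cons_self) hcX.1 hfres
        rw [show ch I (f :: t) X acc = ch I t X (insert f acc) from if_pos hcX,
            show ch I (f :: t) A acc = ch I t A (insert f acc) from if_pos ⟨hfA, hcX.2⟩]
        apply ih
        intro g hg hgX hgch
        exact hyp g (List.mem_cons_of_mem _ hg) hgX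
          (by rwa [show ch I (f :: t) X acc = ch I t X (insert f acc) from if_pos hcX])
      · have hcA : ¬ (f ∈ A ∧ okP I f acc) := fun hc => hcX ⟨hAX hc.1, hc.2⟩
        rw [show ch I (f :: t) X acc = ch I t X acc from if_neg hcX,
            show ch I (f :: t) A acc = ch I t A acc from if_neg hcA]
        apply ih
        intro g hg hgX hgch
        exact hyp g (List.mem_cons_of_mem _ hg) hgX
          (by rwa [show ch I (f :: t) X acc = ch I t X acc from if_neg hcX])

/-- If the greedy choice rejects `e`, at `e`'s turn some constraint was tight. -/
lemma ch_reject (I : HRRC R H) (X : Finset (R × H)) :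
    ∀ (todo : List (R × H)) (acc : Finset (R × H)),
      todo.Nodup → (∀ f ∈ todo, f ∉ acc) →
      ∀ e ∈ todo, e ∈ X → e ∉ ch I todo X acc →
      ∃ l₁ l₂ acc', todo = l₁ ++ e :: l₂ ∧ acc ⊆ acc' ∧
        (∀ f ∈ acc', f ∉ acc → f ∈ ch I todo X acc ∧ f ∈ l₁) ∧ ¬ okP I e acc' := by
  intro todo
  induction todo with
  | nil => intro acc _ _ e het; exact absurd het (List.not_mem_nil)
  | cons f t ih =>
      intro acc hnd hdj e het heX hrej
      have hndt : t.Nodup := (List.nodup_cons.mp hnd).2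
      have hfnt : f ∉ t := (List.nodup_cons.mp hnd).1
      by_cases hfe : f = e
      · subst hfe
        have hnok : ¬ okP I f acc := by
          intro hok
          apply hrej
          rw [show ch I (f :: t) X acc = ch I t X (insert f acc) from if_pos ⟨heX, hok⟩]
          exact ch_acc_subset I t X (insert f acc) (Finset.mem_insert_self f acc)
        exact ⟨[], t, acc, rfl, Finset.Subset.refl _,
          fun g hg hgn => absurd hg hgn, hnok⟩
      · have het' : e ∈ t := by
          rcases List.mem_cons.mp het with h | h
          · exact absurd h.symm hfe
          · exact h
        by_cases hcond : f ∈ X ∧ okP I f acc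
        · rw [show ch I (f :: t) X acc = ch I t X (insert f acc) from if_pos hcond] at hrej ⊢
          have hdj' : ∀ g ∈ t, g ∉ insert f acc := by
            intro g hg
            simp only [Finset.mem_insert]; push_neg
            exact ⟨fun hge => hfnt (hge ▸ hg), hdj g (List.mem_cons_of_mem _ hg)⟩
          obtain ⟨l₁, l₂, acc', hteq, hsub, hprop, hnok⟩ :=
            ih (insert f acc) hndt hdj' e het' heX hrej
          refine ⟨f :: l₁, l₂, acc', by rw [hteq]; rfl,
            (Finset.subset_insert f acc).trans hsub, ?_, hnok⟩
          intro g hg hgn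
          by_cases hgf : g = f
          · subst hgf
            exact ⟨ch_acc_subset I t X (insert g acc) (Finset.mem_insert_self g acc),
              List.mem_cons_self⟩
          · have : g ∉ insert f acc := by
              simp only [Finset.mem_insert]; push_neg; exact ⟨hgf, hgn⟩
            obtain ⟨h1, h2⟩ := hprop g hg this
            exact ⟨h1, List.mem_cons_of_mem _ h2⟩
        · rw [show ch I (f :: t) X acc = ch I t X acc from if_neg hcond] at hrej ⊢
          have hdj' : ∀ g ∈ t, g ∉ acc := fun g hg => hdj g (List.mem_cons_of_mem _ hg)
          obtain ⟨l₁, l₂, acc', hteq, hsub, hprop, hnok⟩ :=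
            ih acc hndt hdj' e het' heX hrej
          refine ⟨f :: l₁, l₂, acc', by rw [hteq]; rfl, hsub, ?_, hnok⟩
          intro g hg hgn
          obtain ⟨h1, h2⟩ := hprop g hg hgn
          exact ⟨h1, List.mem_cons_of_mem _ h2⟩

/-- The greedy choice respects hospital capacities. -/
lemma ch_cntH_le (I : HRRC R H) (X : Finset (R × H)) (h : H) :
    ∀ (todo : List (R × H)) (acc : Finset (R × H)),
      todo.Nodup → (∀ f ∈ todo, f ∉ acc) →
      cntH acc h ≤ I.q h → cntH (ch I todo X acc) h ≤ I.q h := by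
  intro todo
  induction todo with
  | nil => intro acc _ _ hle; exact hle
  | cons f t ih =>
      intro acc hnd hdj hle
      have hndt : t.Nodup := (List.nodup_cons.mp hnd).2
      have hfnt : f ∉ t := (List.nodup_cons.mp hnd).1
      have hfacc : f ∉ acc := hdj f (List.mem_cons_self)
      have hdj' : ∀ g ∈ t, g ∉ insert f acc := by
        intro g hg
        simp only [Finset.mem_insert]; push_neg
        exact ⟨fun hge => hfnt (hge ▸ hg), hdj g (List.mem_cons_of_mem _ hg)⟩
      by_cases hcond : f ∈ X ∧ okP I f acc
      · rw [show ch I (f :: t) X acc = ch I t X (insert f acc) from if_pos hcond]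
        apply ih (insert f acc) hndt hdj'
        rw [cntH_insert hfacc]
        by_cases hfh : f.2 = h
        · rw [if_pos hfh]
          have := hcond.2.1
          rw [hfh] at this
          omega
        · rw [if_neg hfh]; omega
      · rw [show ch I (f :: t) X acc = ch I t X acc from if_neg hcond]
        exact ih acc hndt (fun g hg => hdj g (List.mem_cons_of_mem _ hg)) hle

/-- The greedy choice respects regional caps. -/
lemma ch_cntE_le (I : HRRC R H)
    (hdisj : I.regions.Pairwise fun E₁ E₂ => Disjoint E₁ E₂)
    (X : Finset (R × H)) (h : H) :
    ∀ (todo : List (R × H)) (acc : Finset (R × H)),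
      todo.Nodup → (∀ f ∈ todo, f ∉ acc) →
      cntE I acc h ≤ capOf I h → cntE I (ch I todo X acc) h ≤ capOf I h := by
  intro todo
  induction todo with
  | nil => intro acc _ _ hle; exact hle
  | cons f t ih =>
      intro acc hnd hdj hle
      have hndt : t.Nodup := (List.nodup_cons.mp hnd).2
      have hfnt : f ∉ t := (List.nodup_cons.mp hnd).1
      have hfacc : f ∉ acc := hdj f (List.mem_cons_self)
      have hdj' : ∀ g ∈ t, g ∉ insert f acc := by
        intro g hg
        simp only [Finset.mem_insert]; push_neg
        exact ⟨fun hge => hfnt (hge ▸ hg), hdj g (List.mem_cons_of_mem _ hg)⟩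
      by_cases hcond : f ∈ X ∧ okP I f acc
      · rw [show ch I (f :: t) X acc = ch I t X (insert f acc) from if_pos hcond]
        apply ih (insert f acc) hndt hdj'
        rw [cntE_insert I hfacc]
        by_cases hfh : f.2 ∈ regOf I h
        · rw [if_pos hfh]
          have h1 : cntE I acc f.2 = cntE I acc h := cntE_congr I hdisj hfh acc
          have h2 : capOf I f.2 = capOf I h := (regOf_coh hdisj hfh).2
          have := hcond.2.2
          omega
        · rw [if_neg hfh]; omega
      · rw [show ch I (f :: t) X acc = ch I t X acc from if_neg hcond]
        exact ih acc hndt (fun g hg => hdj g (List.mem_cons_of_mem _ hg)) hle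

/-! ### Fixed point machinery -/

lemma cntH_empty (h : H) : cntH (∅ : Finset (R × H)) h = 0 := by simp [cntH]

lemma cntE_empty (I : HRRC R H) (h : H) : cntE I (∅ : Finset (R × H)) h = 0 := by
  simp [cntE]

lemma mem_LL {I : HRRC R H} {e : R × H} : e ∈ LL I ↔ e ∈ accP I := Finset.mem_sort _

lemma LL_nodup (I : HRRC R H) : (LL I).Nodup := Finset.sort_nodup _ _

lemma CH_subset (I : HRRC R H) (X : Finset (R × H)) : CH I X ⊆ X := by
  intro e he
  rcases ch_subset I (LL I) X ∅ e he with h | h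
  · exact absurd h (Finset.notMem_empty e)
  · exact h.1

lemma rejH_mono (I : HRRC R H)
    (hdisj : I.regions.Pairwise fun E₁ E₂ => Disjoint E₁ E₂)
    {X Y : Finset (R × H)} (hXacc : X ⊆ accP I) (hXY : X ⊆ Y) :
    rejH I X ⊆ rejH I Y := by
  intro e he
  obtain ⟨heX, heC⟩ := Finset.mem_sdiff.mp he
  refine Finset.mem_sdiff.mpr ⟨hXY heX, fun heCY => heC ?_⟩
  exact ch_sub I hdisj hXY (LL I) ∅ ∅ (LL_nodup I)
    (fun f _ => Finset.notMem_empty f) (fun f _ => Finset.notMem_empty f)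
    (fun h => le_refl _) (fun h => Or.inl (le_refl _))
    e heX (mem_LL.mpr (hXacc heX)) heCY

lemma Phi_subset (I : HRRC R H) (X : Finset (R × H)) : Phi I X ⊆ accP I :=
  Finset.sdiff_subset

lemma Phi_mono (I : HRRC R H)
    (hdisj : I.regions.Pairwise fun E₁ E₂ => Disjoint E₁ E₂)
    {X Y : Finset (R × H)} (hXacc : X ⊆ accP I) (hXY : X ⊆ Y) :
    Phi I X ⊆ Phi I Y := by
  have h1 : rejH I X ⊆ rejH I Y := rejH_mono I hdisj hXacc hXY
  have h2 : accP I \ rejH I Y ⊆ accP I \ rejH I X := Finset.sdiff_subset_sdiff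
    (Finset.Subset.refl _) h1
  have h3 : rejR I (accP I \ rejH I Y) ⊆ rejR I (accP I \ rejH I X) := rejR_mono I h2
  exact Finset.sdiff_subset_sdiff (Finset.Subset.refl _) h3

lemma exists_fixedPoint (I : HRRC R H)
    (hdisj : I.regions.Pairwise fun E₁ E₂ => Disjoint E₁ E₂) :
    ∃ X, X ⊆ accP I ∧ Phi I X = X := by
  set f : ℕ → Finset (R × H) := fun n => (Phi I)^[n] ∅ with hf
  have hsucc : ∀ n, f (n + 1) = Phi I (f n) := by
    intro n; rw [hf]; simp only [Function.iterate_succ_apply']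
  have hacc : ∀ n, f n ⊆ accP I := by
    intro n
    induction n with
    | zero => simp [hf]
    | succ k _ => rw [hsucc]; exact Phi_subset I _
  have hmono : ∀ n, f n ⊆ f (n + 1) := by
    intro n
    induction n with
    | zero => simp [hf]
    | succ k ih =>
        rw [hsucc, hsucc]
        exact Phi_mono I hdisj (hacc k) ih
  set N := (accP I).card with hN
  have hcards : ∀ k, (∀ j < k, f j ≠ f (j + 1)) → k ≤ (f k).card := by
    intro k
    induction k with
    | zero => intro _; exact Nat.zero_le _
    | succ m ih =>
        intro hall
        have h1 : m ≤ (f m).card := ih (fun j hj => hall j (Nat.lt_succ_of_lt hj))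
        have h2 : f m ⊂ f (m + 1) :=
          HasSubset.Subset.ssubset_of_ne (hmono m) (hall m (Nat.lt_succ_self m))
        have h3 : (f m).card < (f (m + 1)).card := Finset.card_lt_card h2
        omega
  by_cases hex : ∃ j < N + 1, f j = f (j + 1)
  · obtain ⟨j, _, hj⟩ := hex
    exact ⟨f j, hacc j, by rw [← hsucc, hj]⟩
  · exfalso
    push_neg at hex
    have := hcards (N + 1) hex
    have hle : (f (N + 1)).card ≤ N := by
      rw [hN]; exact Finset.card_le_card (hacc (N + 1))
    omega

/-! ### Order lemmas for the key -/

lemma before_key {I : HRRC R H} {e f : R × H} {l₁ l₂ : List (R × H)}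
    (hdec : LL I = l₁ ++ e :: l₂) (hf : f ∈ l₁) : keyE I f ≤ keyE I e := by
  have hsort : List.Pairwise (lrel I) (LL I) := Finset.pairwise_sort _ _
  rw [hdec] at hsort
  have := (List.pairwise_append.mp hsort).2.2 f hf e (List.mem_cons_self)
  exact key_le_of_key' this

lemma keyE_lt_same {I : HRRC R H} {r r' : R} {h : H}
    (hlt : (I.prefH h).idxOf r < (I.prefH h).idxOf r') :
    keyE I (r, h) < keyE I (r', h) := by
  unfold keyE
  simp only
  omega

lemma idxOf_lt_big {I : HRRC R H} (hwf : I.WellFormed) {r : R} {h : H}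
    (hr : r ∈ I.prefH h) : (I.prefH h).idxOf r < Fintype.card R + 1 := by
  have h1 : (I.prefH h).idxOf r < (I.prefH h).length := List.idxOf_lt_length_iff.mpr hr
  have h2 : (I.prefH h).length ≤ Fintype.card R := (hwf.2.1 h).length_le_card
  omega

/-- The crucial ordering property from the (2,2,2)-free condition. -/
lemma key_lt_of_region {I : HRRC R H} (hwf : I.WellFormed)
    (hdisj : I.regions.Pairwise fun E₁ E₂ => Disjoint E₁ E₂)
    (hγ : ∀ E ∈ I.regions, E.card ≤ 2)
    (hcommon : ∀ E ∈ I.regions, E.card = 2 →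
      ∀ r r' : R, (∀ h ∈ E, r ∈ I.prefH h) → (∀ h ∈ E, r' ∈ I.prefH h) → r = r')
    {r : R} {h h₂ : H}
    (hreg : regOf I h ∈ I.regions) (hh₂ : h₂ ∈ regOf I h) (hne : h ≠ h₂)
    (hrh : r ∈ I.prefH h) (hrh₂ : r ∈ I.prefH h₂)
    (hpref : (I.prefR r).idxOf h < (I.prefR r).idxOf h₂) :
    keyE I (r, h) < keyE I (r, h₂) := by
  set E := regOf I h with hE
  have hhE : h ∈ E := mem_regOf_self I h
  have hcard : E.card = 2 := by
    have hle : E.card ≤ 2 := hγ E hreg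
    have hlt : 1 < E.card := Finset.one_lt_card.mpr ⟨h, hhE, h₂, hh₂, hne⟩
    omega
  have hEeq : E = {h, h₂} := by
    have hsub : ({h, h₂} : Finset H) ⊆ E := by
      intro x hx
      rcases Finset.mem_insert.mp hx with rfl | hx2
      · exact hhE
      · rw [Finset.mem_singleton] at hx2; subst hx2; exact hh₂
    have hc2 : ({h, h₂} : Finset H).card = 2 := Finset.card_pair hne
    exact ((Finset.eq_of_subset_of_card_le hsub (by omega))).symm
  have hmemE : ∀ g ∈ E, g = h ∨ g = h₂ := by
    intro g hg
    rw [hEeq] at hg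
    rcases Finset.mem_insert.mp hg with rfl | hg2
    · exact Or.inl rfl
    · exact Or.inr (Finset.mem_singleton.mp hg2)
  have hrcommon : ∀ g ∈ E, r ∈ I.prefH g := by
    intro g hg
    rcases hmemE g hg with rfl | rfl
    · exact hrh
    · exact hrh₂
  -- ord2 h = 0
  have hex : ∃ c, ∀ g ∈ regOf I h, c ∈ I.prefH g := ⟨r, hrcommon⟩
  have hchoose : hex.choose = r :=
    hcommon E hreg hcard hex.choose r hex.choose_spec hrcommon
  have hord_h : ord2 I h = 0 := by
    rw [ord2, dif_pos hex, if_pos]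
    exact ⟨h₂, hh₂, fun hc => hne hc.symm, by rw [hchoose]; exact hpref⟩
  -- ord2 h₂ = 1
  have hregOf2 : regOf I h₂ = E := (regOf_coh hdisj hh₂).1
  have hex₂ : ∃ c, ∀ g ∈ regOf I h₂, c ∈ I.prefH g := ⟨r, by rw [hregOf2]; exact hrcommon⟩
  have hchoose₂ : hex₂.choose = r := by
    apply hcommon E hreg hcard hex₂.choose r _ hrcommon
    intro g hg
    exact hex₂.choose_spec g (by rw [hregOf2]; exact hg)
  have hord_h₂ : ord2 I h₂ = 1 := by
    rw [ord2, dif_pos hex₂, if_neg]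
    rintro ⟨g, hg, hgne, hlt⟩
    rw [hregOf2] at hg
    rcases hmemE g hg with rfl | rfl
    · rw [hchoose₂] at hlt
      omega
    · exact hgne rfl
  have hb1 : (I.prefH h).idxOf r < Fintype.card R + 1 := idxOf_lt_big hwf hrh
  unfold keyE
  simp only [hord_h, hord_h₂]
  omega

/-! ### Small helper lemmas -/

lemma mem_assignedTo {M : Finset (R × H)} {x : R} {h : H} :
    x ∈ HRRC.assignedTo M h ↔ (x, h) ∈ M := by
  unfold HRRC.assignedTo
  simp only [Finset.mem_image, Finset.mem_filter]
  constructor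
  · rintro ⟨p, ⟨hpM, hp2⟩, hp1⟩
    have : p = (x, h) := Prod.ext hp1 hp2
    rwa [← this]
  · intro hM
    exact ⟨(x, h), ⟨hM, rfl⟩, rfl⟩

lemma assignedTo_card (M : Finset (R × H)) (h : H) :
    (HRRC.assignedTo M h).card = cntH M h := by
  unfold HRRC.assignedTo cntH
  apply Finset.card_image_of_injOn
  intro p hp p' hp' hpp
  exact Prod.ext hpp ((Finset.mem_filter.mp hp).2.trans (Finset.mem_filter.mp hp').2.symm)

lemma pair_list {α : Type*} [DecidableEq α] {l : List α} {a b : α}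
    (hlen : l.length ≤ 2) (ha : a ∈ l) (hb : b ∈ l)
    (hab : l.idxOf a < l.idxOf b) : l = [a, b] := by
  have hia : l.idxOf a < l.length := List.idxOf_lt_length_iff.mpr ha
  have hib : l.idxOf b < l.length := List.idxOf_lt_length_iff.mpr hb
  have h2 : l.length = 2 := by omega
  have hia0 : l.idxOf a = 0 := by omega
  have hib1 : l.idxOf b = 1 := by omega
  match l, h2 with
  | [x, y], _ =>
      have hax : a = x := by
        by_contra hne
        rw [List.idxOf_cons_ne _ (fun hc => hne hc.symm)] at hia0
        exact Nat.succ_ne_zero _ hia0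
      have hbx : b ≠ x := by
        intro hc
        subst hc
        rw [List.idxOf_cons_self] at hib1
        exact Nat.zero_ne_one hib1
      have hby : b = y := by
        rcases List.mem_cons.mp hb with hc | hb2
        · exact absurd hc hbx
        · rcases List.mem_cons.mp hb2 with hc | hb3
          · exact hc
          · exact absurd hb3 (List.not_mem_nil)
      rw [hax, hby]

/-! ### The master construction -/

theorem main (I : HRRC R H) (hwf : I.WellFormed)
    (hdisj : I.regions.Pairwise fun E₁ E₂ => Disjoint E₁ E₂)
    (hβ : ∀ h, (I.prefH h).length ≤ 2)
    (hγ : ∀ E ∈ I.regions, E.card ≤ 2)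
    (hcommon : ∀ E ∈ I.regions, E.card = 2 →
      ∀ r r' : R, (∀ h ∈ E, r ∈ I.prefH h) → (∀ h ∈ E, r' ∈ I.prefH h) → r = r') :
    ∃ M : Finset (R × H), I.IsStronglyStable M := by
  obtain ⟨XH, hXHsub, hfix⟩ := exists_fixedPoint I hdisj
  set XR := accP I \ rejH I XH with hXR
  have hfix' : accP I \ rejR I XR = XH := hfix
  set M := CH I XH with hM
  have hMsubXH : M ⊆ XH := CH_subset I XH
  have hMacc : M ⊆ accP I := hMsubXH.trans hXHsub
  have hXRsub : XR ⊆ accP I := Finset.sdiff_subset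
  -- M is also the residents' choice from XR
  have hMC : M = CR I XR := by
    apply Finset.Subset.antisymm
    · intro e he
      have heXH : e ∈ XH := hMsubXH he
      have heXR : e ∈ XR := Finset.mem_sdiff.mpr
        ⟨hXHsub heXH, fun hc => (Finset.mem_sdiff.mp hc).2 he⟩
      have henot : e ∉ rejR I XR := by
        rw [← hfix'] at heXH
        exact (Finset.mem_sdiff.mp heXH).2
      by_contra hnc
      exact henot (Finset.mem_sdiff.mpr ⟨heXR, hnc⟩)
    · intro e he
      have heXR : e ∈ XR := CR_subset I XR he
      have henot : e ∉ rejR I XR := fun hc => (Finset.mem_sdiff.mp hc).2 he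
      have heXH : e ∈ XH := by
        rw [← hfix']
        exact Finset.mem_sdiff.mpr ⟨(Finset.mem_sdiff.mp heXR).1, henot⟩
      by_contra hnc
      exact (Finset.mem_sdiff.mp heXR).2 (Finset.mem_sdiff.mpr ⟨heXH, hnc⟩)
  have huniq : ∀ r h h', (r, h) ∈ M → (r, h') ∈ M → h = h' := by
    intro r h h' h1 h2
    rw [hMC] at h1 h2
    have := CR_unique hwf hXRsub h1 h2 rfl
    exact congrArg Prod.snd this
  have hcntHM : ∀ h, cntH M h ≤ I.q h := fun h =>
    ch_cntH_le I XH h (LL I) ∅ (LL_nodup I) (fun f _ => Finset.notMem_empty f)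
      (by rw [cntH_empty]; exact Nat.zero_le _)
  have hcntEM : ∀ h, cntE I M h ≤ capOf I h := fun h =>
    ch_cntE_le I hdisj XH h (LL I) ∅ (LL_nodup I) (fun f _ => Finset.notMem_empty f)
      (by rw [cntE_empty]; exact Nat.zero_le _)
  have hmatch : I.IsMatching M := by
    refine ⟨?_, huniq, ?_⟩
    · intro p hp
      have hpacc := mem_accP.mp (hMacc hp)
      exact ⟨hpacc, (hwf.2.2.1 p.1 p.2).mp hpacc⟩
    · intro h
      rw [assignedTo_card]
      exact hcntHM h
  have hfeas : I.FeasibleCaps M := by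
    intro E hE
    obtain ⟨h₀, hh₀⟩ := hwf.2.2.2 E hE
    obtain ⟨hreg0, hcap0⟩ := regOf_eq hdisj hE hh₀
    calc (HRRC.assignedIn M E).card
        ≤ (M.filter fun p => p.2 ∈ E).card := Finset.card_image_le
      _ = cntE I M h₀ := by unfold cntE; rw [hreg0]
      _ ≤ capOf I h₀ := hcntEM h₀
      _ = I.cap E := hcap0
  refine ⟨M, hmatch, hfeas, ?_⟩
  -- no strong blocking pair
  intro r h hSBP
  obtain ⟨⟨hnm, ⟨hacc1, hacc2⟩, hb3, hb4⟩, hstrong⟩ := hSBP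
  have heP : (r, h) ∈ accP I := mem_accP.mpr hacc1
  -- the pair is not in XR : otherwise the resident would not want h
  have heXR : (r, h) ∉ XR := by
    intro heXR
    obtain ⟨g, hgCR, hg1⟩ := CR_exists (I := I) heXR
    have hg1' : g.1 = r := hg1
    have hgM : g ∈ M := by rw [hMC]; exact hgCR
    have hgM' : (r, g.2) ∈ M := by
      rw [show (r, g.2) = g from Prod.ext hg1'.symm rfl]
      exact hgM
    rcases hb3 with hall | ⟨h'', hh''M, hlp⟩
    · exact hall g.2 hgM'
    · have hg2 : g.2 = h'' := huniq r g.2 h'' hgM' hh''M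
      have hmin0 : List.idxOf g.2 (I.prefR g.1) ≤ List.idxOf h (I.prefR r) :=
        (Finset.mem_filter.mp hgCR).2 (r, h) heXR hg1'.symm
      rw [hg1', hg2] at hmin0
      exact absurd hlp.2 (not_lt.mpr hmin0)
  have herejH : (r, h) ∈ rejH I XH := by
    by_contra hc
    exact heXR (Finset.mem_sdiff.mpr ⟨heP, hc⟩)
  have heXH : (r, h) ∈ XH := (Finset.mem_sdiff.mp herejH).1
  have heM : (r, h) ∉ M := hnm
  -- consistency : greedy on M + e also rejects e
  have hinsub : insert (r, h) M ⊆ XH := by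
    intro p hp
    rcases Finset.mem_insert.mp hp with rfl | hpM
    · exact heXH
    · exact hMsubXH hpM
  have hcons : ch I (LL I) (insert (r, h) M) ∅ = M := by
    rw [show M = ch I (LL I) XH ∅ from rfl]
    apply ch_consistent I hinsub
    intro f _ _ hfch
    exact Finset.mem_insert_of_mem hfch
  have herej2 : (r, h) ∉ ch I (LL I) (insert (r, h) M) ∅ := by
    rw [hcons]; exact heM
  obtain ⟨l₁, l₂, acc', hdec, -, hprop, hnok⟩ :=
    ch_reject I (insert (r, h) M) (LL I) ∅ (LL_nodup I)
      (fun f _ => Finset.notMem_empty f) (r, h) (mem_LL.mpr heP)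
      (Finset.mem_insert_self _ _) herej2
  have hacc'M : acc' ⊆ M := by
    intro f hf
    have := (hprop f hf (Finset.notMem_empty f)).1
    rwa [hcons] at this
  have hacc'key : ∀ f ∈ acc', keyE I f ≤ keyE I (r, h) := by
    intro f hf
    exact before_key hdec (hprop f hf (Finset.notMem_empty f)).2
  have hnok' : I.q h ≤ cntH acc' h ∨ capOf I h ≤ cntE I acc' h := by
    rcases not_and_or.mp hnok with h1 | h2
    · exact Or.inl (not_lt.mp h1)
    · exact Or.inr (not_lt.mp h2)
  -- the "worse resident" alternative is impossible
  have hworse : ¬ ∃ r' ∈ HRRC.assignedTo M h, ListPref (I.prefH h) r r' := by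
    rintro ⟨r', hr'mem, hr'in, hr'lt⟩
    have hr'M : (r', h) ∈ M := mem_assignedTo.mp hr'mem
    have hlist : I.prefH h = [r, r'] := pair_list (hβ h) hacc2 hr'in hr'lt
    have hrr' : r ≠ r' := fun hc => by rw [hc] at hr'lt; exact lt_irrefl _ hr'lt
    have hkey : keyE I (r, h) < keyE I (r', h) := by
      apply keyE_lt_same
      rw [hlist, List.idxOf_cons_self, List.idxOf_cons_ne _ hrr']
      exact Nat.succ_pos _
    have hr'acc' : (r', h) ∉ acc' := fun hmem =>
      absurd (hacc'key _ hmem) (not_le.mpr hkey)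
    -- every edge of M at h is (r', h)
    have hMh : ∀ f ∈ M, f.2 = h → f = (r', h) := by
      intro f hfM hf2
      have hf1acc : f.1 ∈ I.prefH h := by
        have := (hmatch.1 f hfM).2
        rwa [hf2] at this
      rw [hlist] at hf1acc
      have hf1 : f.1 = r ∨ f.1 = r' := by
        rcases List.mem_cons.mp hf1acc with hc | hh2
        · exact Or.inl hc
        · rcases List.mem_cons.mp hh2 with hc | hh3
          · exact Or.inr hc
          · exact absurd hh3 (List.not_mem_nil)
      rcases hf1 with hfr | hfr'
      · exfalso
        have : f = (r, h) := Prod.ext hfr hf2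
        rw [this] at hfM
        exact heM hfM
      · exact Prod.ext hfr' hf2
    rcases hnok' with hqt | hct
    · -- hospital counter tight at e's turn : impossible
      have hzero : (acc'.filter fun p => p.2 = h) = ∅ := by
        rw [Finset.eq_empty_iff_forall_notMem]
        intro f hf
        obtain ⟨hfa, hf2⟩ := Finset.mem_filter.mp hf
        have := hMh f (hacc'M hfa) hf2
        rw [this] at hfa
        exact hr'acc' hfa
      have : cntH acc' h = 0 := by unfold cntH; rw [hzero]; rfl
      rw [this] at hqt
      have hq0 : I.q h = 0 := Nat.le_zero.mp hqt
      have := hmatch.2.2 h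
      rw [hq0] at this
      have hmem : r' ∈ HRRC.assignedTo M h := hr'mem
      have : HRRC.assignedTo M h = ∅ := Finset.card_eq_zero.mp (Nat.le_zero.mp this)
      rw [this] at hmem
      exact Finset.notMem_empty _ hmem
    · -- region counter tight at e's turn : impossible
      rcases capOf_cases I h with hbig | ⟨hregmem, hcapeq⟩
      · have h1 : cntE I acc' h ≤ acc'.card := Finset.card_filter_le _ _
        have h2 : acc'.card ≤ M.card := Finset.card_le_card hacc'M
        have h3 : M.card ≤ Fintype.card (R × H) := Finset.card_le_univ M
        omega
      · have hsub2 : (acc'.filter fun p => p.2 ∈ regOf I h)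
            ⊆ (M.filter fun p => p.2 ∈ regOf I h) :=
          Finset.filter_subset_filter _ hacc'M
        have hle2 : cntE I M h ≤ cntE I acc' h := by
          have h5 := hcntEM h
          omega
        have heqf : (acc'.filter fun p => p.2 ∈ regOf I h)
            = (M.filter fun p => p.2 ∈ regOf I h) :=
          Finset.eq_of_subset_of_card_le hsub2 hle2
        have hr'F : (r', h) ∈ M.filter fun p => p.2 ∈ regOf I h :=
          Finset.mem_filter.mpr ⟨hr'M, mem_regOf_self I h⟩
        rw [← heqf] at hr'F
        exact hr'acc' (Finset.mem_filter.mp hr'F).1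
  have hroom : (HRRC.assignedTo M h).card < I.q h := hb4.resolve_right hworse
  have hmove : I.FeasibleCaps (HRRC.move M r h) := hstrong.resolve_right hworse
  rcases hnok' with hqt | hct
  · -- hospital tight : contradicts room
    have h1 : cntH acc' h ≤ cntH M h := cntH_mono hacc'M h
    have h2 : (HRRC.assignedTo M h).card = cntH M h := assignedTo_card M h
    omega
  · rcases capOf_cases I h with hbig | ⟨hregmem, hcapeq⟩
    · have h1 : cntE I acc' h ≤ acc'.card := Finset.card_filter_le _ _
      have h2 : acc'.card ≤ M.card := Finset.card_le_card hacc'M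
      have h3 : M.card ≤ Fintype.card (R × H) := Finset.card_le_univ M
      omega
    · have hsub2 : (acc'.filter fun p => p.2 ∈ regOf I h)
          ⊆ (M.filter fun p => p.2 ∈ regOf I h) :=
        Finset.filter_subset_filter _ hacc'M
      have h5 := hcntEM h
      rw [hcapeq] at hct h5
      have hle3 : (acc'.filter fun p => p.2 ∈ regOf I h).card
          ≤ (M.filter fun p => p.2 ∈ regOf I h).card := Finset.card_le_card hsub2
      have hle2 : (M.filter fun p => p.2 ∈ regOf I h).card
          ≤ (acc'.filter fun p => p.2 ∈ regOf I h).card := by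
        unfold cntE at hct h5
        omega
      have heqf : (acc'.filter fun p => p.2 ∈ regOf I h)
          = (M.filter fun p => p.2 ∈ regOf I h) :=
        Finset.eq_of_subset_of_card_le hsub2 hle2
      have hFcap : (M.filter fun p => p.2 ∈ regOf I h).card = I.cap (regOf I h) := by
        unfold cntE at hct h5
        omega
      have hkeyF : ∀ f ∈ M.filter fun p => p.2 ∈ regOf I h,
          keyE I f ≤ keyE I (r, h) := by
        intro f hf
        rw [← heqf] at hf
        exact hacc'key f (Finset.mem_filter.mp hf).1
      have hmE := hmove (regOf I h) hregmem
      -- compute the assigned set after the move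
      have hAI : HRRC.assignedIn (HRRC.move M r h) (regOf I h)
          = insert r (((M.filter fun p => p.2 ∈ regOf I h).image Prod.fst).erase r) := by
        ext x
        simp only [HRRC.assignedIn, HRRC.move, Finset.mem_image, Finset.mem_filter,
          Finset.mem_union, Finset.mem_singleton, Finset.mem_insert, Finset.mem_erase]
        constructor
        · rintro ⟨p, ⟨hp1 | hp2, hpE⟩, hpx⟩
          · by_cases hxr : x = r
            · exact Or.inl hxr
            · exact Or.inr ⟨hxr, p, ⟨hp1.1, hpE⟩, hpx⟩
          · left
            rw [hp2] at hpx
            exact hpx.symm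
        · rintro (rfl | ⟨hxr, p, ⟨hpM, hpE⟩, hpx⟩)
          · exact ⟨(x, h), ⟨Or.inr rfl, mem_regOf_self I h⟩, rfl⟩
          · exact ⟨p, ⟨Or.inl ⟨hpM, fun hc => hxr (hpx ▸ hc ▸ rfl)⟩, hpE⟩, hpx⟩
      by_cases hrF : r ∈ (M.filter fun p => p.2 ∈ regOf I h).image Prod.fst
      · -- r is already assigned inside the region : contradiction via key ordering
        obtain ⟨f₂, hf₂F, hf₂1⟩ := Finset.mem_image.mp hrF
        obtain ⟨hf₂M, hf₂E⟩ := Finset.mem_filter.mp hf₂F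
        have hf₂pair : f₂ = (r, f₂.2) := Prod.ext hf₂1 rfl
        have hne2 : h ≠ f₂.2 := by
          intro hc
          apply heM
          rw [hf₂pair, ← hc] at hf₂M
          exact hf₂M
        have hrM2 : (r, f₂.2) ∈ M := by rw [← hf₂pair]; exact hf₂M
        rcases hb3 with hall | ⟨h'', hh''M, hlp⟩
        · exact hall f₂.2 hrM2
        · have hh2 : f₂.2 = h'' := huniq r f₂.2 h'' hrM2 hh''M
          have hrpH2 : r ∈ I.prefH f₂.2 :=
            ((hwf.2.2.1 r f₂.2).mp (mem_accP.mp (hMacc hrM2)))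
          have hkeylt : keyE I (r, h) < keyE I (r, f₂.2) := by
            apply key_lt_of_region hwf hdisj hγ hcommon hregmem hf₂E hne2 hacc2 hrpH2
            rw [hh2]
            exact hlp.2
          have hle4 := hkeyF f₂ hf₂F
          rw [hf₂pair] at hle4
          omega
      · -- r is new to the region : the move exceeds the cap
        have hinj : ((M.filter fun p => p.2 ∈ regOf I h).image Prod.fst).card
            = (M.filter fun p => p.2 ∈ regOf I h).card := by
          apply Finset.card_image_of_injOn
          intro p hp p' hp' hpp
          have hpM := (Finset.mem_filter.mp hp).1
          have hp'M := (Finset.mem_filter.mp hp').1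
          have hp2 : p.2 = p'.2 := by
            apply huniq p.1 p.2 p'.2
            · exact (show (p.1, p.2) = p from rfl) ▸ hpM
            · rw [hpp]
              exact (show (p'.1, p'.2) = p' from rfl) ▸ hp'M
          exact Prod.ext hpp hp2
        rw [hAI, Finset.erase_eq_of_notMem hrF, Finset.card_insert_of_notMem hrF] at hmE
        omega

end SSAux

end Aux


/-- Every HRRCDR instance (regions pairwise disjoint) in which each resident's list
has length ≤ 2, each hospital's list has length ≤ 2, every region has size ≤ 2, and
for every region of size 2 at most one resident is acceptable to both of its
hospitals, admits a strongly stable matching. -/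
theorem twotwotwo_free_HRRCDR_has_strongly_stable_matching
    {R H : Type*} [DecidableEq R] [DecidableEq H] [Fintype R] [Fintype H]
    (I : HRRC R H) (hwf : I.WellFormed)
    (hdisj : I.regions.Pairwise fun E₁ E₂ => Disjoint E₁ E₂)
    (hα : ∀ r, (I.prefR r).length ≤ 2)
    (hβ : ∀ h, (I.prefH h).length ≤ 2)
    (hγ : ∀ E ∈ I.regions, E.card ≤ 2)
    (hcommon : ∀ E ∈ I.regions, E.card = 2 →
      ∀ r r' : R, (∀ h ∈ E, r ∈ I.prefH h) → (∀ h ∈ E, r' ∈ I.prefH h) → r = r') :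
    ∃ M : Finset (R × H), I.IsStronglyStable M := by
  exact SSAux.main I hwf hdisj hβ hγ hcommon
end
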